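/- Let G be a finite group with Φ(G) = 1 (trivial Frattini subgroup) and O_π(G) = 1 for a set of primes π, and suppose every minimal normal subgroup of G is solvable (i.e., abelian). Then G = F(G) ⋊ A is a semidirect product where F(G) is an abelian π'-group and C_G(F(G)) = F(G). -/

import Mathlib

/-- The Fitting subgroup: the join of all nilpotent normal subgroups. -/
def fittingSubgroup (G : Type*) [Group G] : Subgroup G :=
  ⨆ (N : Subgroup G) (_ : N.Normal) (_ : Group.IsNilpotent N), N


section Aux
open Pointwise

variable {G : Type*} [Group G]

lemma auxNilpotentOfComm {H : Type*} [Group H] (h : ∀ x y : H, x * y = y * x) :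
    Group.IsNilpotent H :=
  ⟨1, by
    rw [upperCentralSeries_one]
    exact eq_top_iff.2 fun x _ => Subgroup.mem_center_iff.2 fun g => h g x⟩

/-- Dedekind modular law, for a normal subgroup `P ≤ H`. -/
lemma auxModular (P H M : Subgroup G) [P.Normal] (hPH : P ≤ H) :
    H ⊓ (P ⊔ M) = P ⊔ (H ⊓ M) := by
  apply le_antisymm
  · intro x hx
    rw [Subgroup.mem_inf] at hx
    obtain ⟨hxH, hxPM⟩ := hx
    have hx' : x ∈ ((P : Set G) * (M : Set G)) := by
      rw [← Subgroup.normal_mul P M]; exact hxPM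
    obtain ⟨p, hp, m, hm, rfl⟩ := hx'
    have hmH : m ∈ H := by
      have := mul_mem (inv_mem (hPH hp)) hxH
      simpa [mul_assoc] using this
    exact mul_mem (Subgroup.mem_sup_left hp)
      (Subgroup.mem_sup_right (Subgroup.mem_inf.2 ⟨hmH, hm⟩))
  · exact sup_le (le_inf hPH le_sup_left)
      (le_inf inf_le_left (inf_le_right.trans le_sup_right))

/-- A characteristic subgroup of a normal subgroup is normal. -/
lemma auxCharNormal {K : Subgroup G} [K.Normal] (H : Subgroup K) [H.Characteristic] :
    (H.map K.subtype).Normal := by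
  constructor
  rintro x ⟨y, hy, rfl⟩ g
  have he : H.map ((MulAut.conjNormal g : MulAut K) : K ≃* K).toMonoidHom = H :=
    Subgroup.characteristic_iff_map_eq.mp inferInstance _
  refine ⟨(MulAut.conjNormal g : MulAut K) y, ?_, ?_⟩
  · rw [← he]; exact Subgroup.mem_map_of_mem _ hy
  · simp [MulAut.conjNormal_apply]

lemma auxMemFrattini {x : G} (h : ∀ M : Subgroup G, IsCoatom M → x ∈ M) :
    x ∈ frattini G := by
  have : frattini G = ⨅ M ∈ {M : Subgroup G | IsCoatom M}, M := rfl
  rw [this]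
  simp only [Subgroup.mem_iInf]
  exact fun M hM => h M hM

lemma auxLeFrattini {A : Subgroup G} (h : ∀ M : Subgroup G, IsCoatom M → A ≤ M) :
    A ≤ frattini G :=
  fun _ hx => auxMemFrattini fun M hM => h M hM hx

/-- The Frattini subgroup of a normal subgroup maps into the Frattini subgroup. -/
lemma auxFrattiniLe [Finite G] {N : Subgroup G} (hN : N.Normal) :
    (frattini (↥N)).map N.subtype ≤ frattini G := by
  haveI := hN
  haveI hPnormal : ((frattini ↥N).map N.subtype).Normal := auxCharNormal _
  set P := (frattini ↥N).map N.subtype with hP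
  apply auxLeFrattini
  intro M hM
  by_contra hPM
  have hsup : P ⊔ M = ⊤ := hM.2 _ (right_lt_sup.2 hPM)
  have hPN : P ≤ N := Subgroup.map_subtype_le _
  have hmod : N ⊓ (P ⊔ M) = P ⊔ (N ⊓ M) := auxModular P N M hPN
  rw [hsup, inf_top_eq] at hmod
  have key : (N ⊓ M).subgroupOf N ⊔ frattini ↥N = ⊤ := by
    apply Subgroup.map_injective N.subtype_injective
    rw [Subgroup.map_sup, Subgroup.subgroupOf_map_subtype]
    have h1 : (⊤ : Subgroup ↥N).map N.subtype = N := by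
      rw [← MonoidHom.range_eq_map, Subgroup.range_subtype]
    rw [h1, inf_right_comm, inf_idem, sup_comm, ← hP, ← hmod]
  have := frattini_nongenerating key
  have hNM : N ≤ M := (Subgroup.subgroupOf_eq_top.mp this).trans inf_le_right
  exact hPM (hPN.trans hNM)

/-- In a finite group with trivial Frattini subgroup, nilpotent normal subgroups
are abelian. -/
lemma auxCommOfNilpotentNormal [Finite G] (hfrattini : frattini G = ⊥)
    {N : Subgroup G} (hN : N.Normal) (hnil : Group.IsNilpotent ↥N) :
    ∀ x ∈ N, ∀ y ∈ N, x * y = y * x := by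
  have h1 : frattini ↥N = ⊥ := by
    have h := auxFrattiniLe hN
    rw [hfrattini, le_bot_iff] at h
    exact Subgroup.map_injective N.subtype_injective (by rw [h, Subgroup.map_bot])
  have hcomm : ∀ a b : ↥N, a * b = b * a := by
    intro a b
    have hmem : a * b * a⁻¹ * b⁻¹ ∈ frattini ↥N := by
      apply auxMemFrattini
      intro M hM
      haveI hMn : M.Normal :=
        Subgroup.NormalizerCondition.normal_of_coatom M (normalizerCondition_of_isNilpotent) hM
      have hzv : ∀ z : ↥N ⧸ M, z = 1 ∨ Subgroup.zpowers z = ⊤ := by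
        intro z
        have hMle : M ≤ Subgroup.comap (QuotientGroup.mk' M) (Subgroup.zpowers z) := by
          intro m hm
          have h3 : QuotientGroup.mk' M m = 1 := (QuotientGroup.eq_one_iff m).2 hm
          simp only [Subgroup.mem_comap, h3]
          exact one_mem _
        rcases eq_or_lt_of_le hMle with heq | hlt
        · left
          obtain ⟨x, rfl⟩ := QuotientGroup.mk'_surjective M z
          have hxmem : x ∈ Subgroup.comap (QuotientGroup.mk' M)
              (Subgroup.zpowers (QuotientGroup.mk' M x)) :=
            Subgroup.mem_comap.2 (Subgroup.mem_zpowers _)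
          rw [← heq] at hxmem
          exact (QuotientGroup.eq_one_iff x).2 hxmem
        · right
          have htop : Subgroup.comap (QuotientGroup.mk' M) (Subgroup.zpowers z) = ⊤ :=
            hM.2 _ hlt
          have h4 := Subgroup.map_comap_eq_self_of_surjective
            (QuotientGroup.mk'_surjective M) (Subgroup.zpowers z)
          rw [htop] at h4
          rw [← h4, ← MonoidHom.range_eq_map]
          exact (MonoidHom.range_eq_top).2 (QuotientGroup.mk'_surjective M)
      have hQcomm : ∀ p q : ↥N ⧸ M, p * q = q * p := by
        intro p q
        rcases hzv p with rfl | htop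
        · simp
        · have hq : q ∈ Subgroup.zpowers p := htop ▸ Subgroup.mem_top q
          obtain ⟨k, rfl⟩ := hq
          simpa using ((Commute.refl p).zpow_right k).eq
      have h5 : QuotientGroup.mk' M (a * b * a⁻¹ * b⁻¹) = 1 := by
        simp only [map_mul, map_inv]
        rw [hQcomm (QuotientGroup.mk' M a) (QuotientGroup.mk' M b)]
        group
      exact (QuotientGroup.eq_one_iff _).1 h5
    rw [h1, Subgroup.mem_bot] at hmem
    rw [← mul_inv_eq_one, mul_inv_rev, ← mul_assoc]
    exact hmem
  intro x hx y hy
  have := hcomm ⟨x, hx⟩ ⟨y, hy⟩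
  exact congrArg Subtype.val this

end Aux

section Aux2
open Pointwise
variable {G : Type*} [Group G]

lemma auxFittingLe (N : Subgroup G) (hN : N.Normal) (hnil : Group.IsNilpotent ↥N) :
    N ≤ fittingSubgroup G :=
  le_iSup_of_le N (le_iSup_of_le hN (le_iSup_of_le hnil le_rfl))

lemma auxFittingLeOf (X : Subgroup G)
    (h : ∀ N : Subgroup G, N.Normal → Group.IsNilpotent ↥N → N ≤ X) :
    fittingSubgroup G ≤ X :=
  iSup_le fun N => iSup_le fun hN => iSup_le fun hnil => h N hN hnil

lemma auxFittingNormal : (fittingSubgroup G).Normal := by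
  constructor
  intro x hx g
  have h : fittingSubgroup G ≤
      Subgroup.comap ((MulAut.conj g) : G ≃* G).toMonoidHom (fittingSubgroup G) := by
    apply auxFittingLeOf
    intro N hN hnil y hy
    rw [Subgroup.mem_comap]
    exact auxFittingLe N hN hnil (hN.conj_mem y hy g)
  exact h hx

lemma auxQuotCenterNilpotent {H : Type*} [Group H]
    (h : ∀ x y : H, x⁻¹ * y⁻¹ * x * y ∈ Subgroup.center H) : Group.IsNilpotent H := by
  apply of_quotient_center_nilpotent
  apply auxNilpotentOfComm
  intro p q
  obtain ⟨x, rfl⟩ := QuotientGroup.mk_surjective p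
  obtain ⟨y, rfl⟩ := QuotientGroup.mk_surjective q
  show QuotientGroup.mk (x * y) = QuotientGroup.mk (y * x)
  rw [QuotientGroup.eq]
  have h2 := h y x
  simpa [mul_assoc, mul_inv_rev] using h2

lemma auxSupNilpotent [Finite G] (hfr : frattini G = ⊥)
    {N B : Subgroup G} (hN : N.Normal) (hB : B.Normal)
    (hNnil : Group.IsNilpotent ↥N) (hBnil : Group.IsNilpotent ↥B) :
    Group.IsNilpotent ↥(N ⊔ B) := by
  haveI := hN; haveI := hB
  have hNc := auxCommOfNilpotentNormal hfr hN hNnil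
  have hBc := auxCommOfNilpotentNormal hfr hB hBnil
  have hdecomp : ∀ x ∈ N ⊔ B, ∃ n ∈ N, ∃ b ∈ B, n * b = x := by
    intro x hx
    have : x ∈ ((N : Set G) * (B : Set G)) := by
      rw [← Subgroup.normal_mul N B]; exact hx
    obtain ⟨n, hn, b, hb, rfl⟩ := this
    exact ⟨n, hn, b, hb, rfl⟩
  -- commutators of N ⊔ B lie in N
  have hcommN : ∀ {K L : Subgroup G}, K.Normal → L.Normal →
      (∀ x ∈ L, ∀ y ∈ L, x * y = y * x) → (∀ x ∈ K ⊔ L, ∃ n ∈ K, ∃ b ∈ L, n * b = x) →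
      ∀ x ∈ K ⊔ L, ∀ y ∈ K ⊔ L, x * y * x⁻¹ * y⁻¹ ∈ K := by
    intro K L hK hL hLc hdec x hx y hy
    haveI := hK
    obtain ⟨n1, hn1, b1, hb1, rfl⟩ := hdec x hx
    obtain ⟨n2, hn2, b2, hb2, rfl⟩ := hdec y hy
    have h5 : QuotientGroup.mk' K (n1 * b1 * (n2 * b2) * (n1 * b1)⁻¹ * (n2 * b2)⁻¹) = 1 := by
      have e01 : QuotientGroup.mk' K n1 = 1 := (QuotientGroup.eq_one_iff n1).2 hn1
      have e02 : QuotientGroup.mk' K n2 = 1 := (QuotientGroup.eq_one_iff n2).2 hn2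
      have ecomm := congrArg (QuotientGroup.mk' K) (hLc b1 hb1 b2 hb2)
      rw [map_mul, map_mul] at ecomm
      simp only [map_mul, map_inv, e01, e02, one_mul]
      rw [ecomm]
      group
    exact (QuotientGroup.eq_one_iff _).1 h5
  have hcomm' : ∀ x ∈ N ⊔ B, ∀ y ∈ N ⊔ B, x * y * x⁻¹ * y⁻¹ ∈ N ⊓ B := by
    intro x hx y hy
    refine Subgroup.mem_inf.2 ⟨hcommN hN hB hBc hdecomp x hx y hy, ?_⟩
    have hdec' : ∀ x ∈ B ⊔ N, ∃ n ∈ B, ∃ b ∈ N, n * b = x := by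
      intro z hz
      have : z ∈ ((B : Set G) * (N : Set G)) := by
        rw [← Subgroup.normal_mul B N]; exact hz
      obtain ⟨n, hn, b, hb, rfl⟩ := this
      exact ⟨n, hn, b, hb, rfl⟩
    exact hcommN hB hN hNc hdec' x (by rwa [sup_comm]) y (by rwa [sup_comm])
  have hcent : ∀ z ∈ N ⊓ B, ∀ d ∈ N ⊔ B, z * d = d * z := by
    intro z hz d hd
    obtain ⟨n, hn, b, hb, rfl⟩ := hdecomp d hd
    rw [Subgroup.mem_inf] at hz
    rw [← mul_assoc, hNc z hz.1 n hn, mul_assoc, hBc z hz.2 b hb, ← mul_assoc]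
  apply auxQuotCenterNilpotent
  intro x y
  have hz : ((x : G))⁻¹ * ((y : G))⁻¹ * (x : G) * (y : G) ∈ N ⊓ B := by
    have := hcomm' ((x : G))⁻¹ (inv_mem x.2) ((y : G))⁻¹ (inv_mem y.2)
    simpa using this
  refine Subgroup.mem_center_iff.2 fun g => ?_
  apply Subtype.ext
  push_cast
  exact (hcent _ hz (g : G) g.2).symm

lemma auxFittingComm [Finite G] (hfr : frattini G = ⊥) :
    ∀ x ∈ fittingSubgroup G, ∀ y ∈ fittingSubgroup G, x * y = y * x := by
  have hFC : fittingSubgroup G ≤ Subgroup.centralizer (fittingSubgroup G : Set G) := by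
    apply auxFittingLeOf
    intro N hN hnil n hn
    rw [Subgroup.mem_centralizer_iff]
    intro h hh
    have h2 : fittingSubgroup G ≤ Subgroup.centralizer ({n} : Set G) := by
      apply auxFittingLeOf
      intro B hB hBnil b hb
      rw [Subgroup.mem_centralizer_iff]
      intro m hm
      rw [Set.mem_singleton_iff] at hm
      subst hm
      haveI := hN; haveI := hB
      have hD : (N ⊔ B).Normal := Subgroup.sup_normal N B
      have hDnil := auxSupNilpotent hfr hN hB hnil hBnil
      exact auxCommOfNilpotentNormal hfr hD hDnil m (Subgroup.mem_sup_left hn) b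
        (Subgroup.mem_sup_right hb)
    exact (Subgroup.mem_centralizer_iff.1 (h2 hh) n (Set.mem_singleton n)).symm
  intro x hx y hy
  exact Subgroup.mem_centralizer_iff.1 (hFC hy) x hx

end Aux2

section Aux3
open Pointwise
variable {G : Type*} [Group G] [Finite G]

lemma auxMinNormal {K : Subgroup G} (hK : K.Normal) (hKbot : K ≠ ⊥) :
    ∃ A : Subgroup G, A.Normal ∧ A ≠ ⊥ ∧ A ≤ K ∧
      ∀ B : Subgroup G, B.Normal → B ≤ A → B = ⊥ ∨ B = A := by
  obtain ⟨A, hA, hmin⟩ : ∃ A ∈ {N : Subgroup G | N.Normal ∧ N ≠ ⊥ ∧ N ≤ K},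
      ∀ B ∈ {N : Subgroup G | N.Normal ∧ N ≠ ⊥ ∧ N ≤ K}, B ≤ A → A = B := by
    obtain ⟨A, hA, hmin⟩ := Set.Finite.exists_minimalFor id
      {N : Subgroup G | N.Normal ∧ N ≠ ⊥ ∧ N ≤ K} (Set.toFinite _) ⟨K, hK, hKbot, le_rfl⟩
    exact ⟨A, hA, fun B hB hBA => le_antisymm (hmin hB hBA) hBA⟩
  refine ⟨A, hA.1, hA.2.1, hA.2.2, fun B hB hBA => ?_⟩
  by_cases hb : B = ⊥
  · exact Or.inl hb
  · exact Or.inr ((hmin B ⟨hB, hb, hBA.trans hA.2.2⟩ hBA).symm)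

lemma auxExistsCoatom (hfr : frattini G = ⊥) {A : Subgroup G} (hA : A ≠ ⊥) :
    ∃ M : Subgroup G, IsCoatom M ∧ ¬ A ≤ M := by
  by_contra h
  push_neg at h
  exact hA (le_bot_iff.1 (hfr ▸ auxLeFrattini fun M hM => h M hM))

lemma auxComplementExists (hfr : frattini G = ⊥)
    {F : Subgroup G} (hFnormal : F.Normal)
    (hFcomm : ∀ x ∈ F, ∀ y ∈ F, x * y = y * x) :
    ∃ A : Subgroup G, A ⊓ F = ⊥ ∧ A ⊔ F = ⊤ := by
  haveI := hFnormal
  have main : ∀ H : Subgroup G, H ⊔ F = ⊤ →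
      ∃ A : Subgroup G, A ≤ H ∧ A ⊓ F = ⊥ ∧ A ⊔ F = ⊤ := by
    intro H
    induction H using WellFoundedLT.induction with
    | _ H IH =>
    intro hHF
    by_cases hbot : H ⊓ F = ⊥
    · exact ⟨H, le_rfl, hbot, hHF⟩
    have hdecomp : ∀ g : G, ∃ h ∈ H, ∃ f ∈ F, h * f = g := by
      intro g
      have hg : g ∈ ((H : Set G) * (F : Set G)) := by
        rw [← Subgroup.mul_normal H F, hHF]; trivial
      obtain ⟨h, hh, f, hf, rfl⟩ := hg
      exact ⟨h, hh, f, hf, rfl⟩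
    have hHFnormal : (H ⊓ F).Normal := by
      constructor
      intro x hx g
      rw [Subgroup.mem_inf] at hx
      obtain ⟨h, hh, f, hf, rfl⟩ := hdecomp g
      have hfix : f * x * f⁻¹ = x := by
        rw [hFcomm f hf x hx.2, mul_assoc, mul_inv_cancel, mul_one]
      have : h * f * x * (h * f)⁻¹ = h * x * h⁻¹ := by
        rw [mul_inv_rev, show h * f * x * (f⁻¹ * h⁻¹) = h * (f * x * f⁻¹) * h⁻¹ by group, hfix]
      rw [this]
      exact Subgroup.mem_inf.2 ⟨H.mul_mem (H.mul_mem hh hx.1) (H.inv_mem hh),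
        hFnormal.conj_mem x hx.2 h⟩
    obtain ⟨A0, hA0n, hA0bot, hA0le, hA0min⟩ := auxMinNormal hHFnormal hbot
    haveI := hA0n
    have hA0F : A0 ≤ F := hA0le.trans inf_le_right
    have hA0H : A0 ≤ H := hA0le.trans inf_le_left
    obtain ⟨M, hM, hA0M⟩ := auxExistsCoatom hfr hA0bot
    have hMA0top : A0 ⊔ M = ⊤ := by
      rw [sup_comm]; exact hM.2 _ (left_lt_sup.2 hA0M)
    have hA0Mbot : A0 ⊓ M = ⊥ := by
      have hnormal : (A0 ⊓ M).Normal := by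
        constructor
        intro x hx g
        have hg : g ∈ ((M : Set G) * (A0 : Set G)) := by
          rw [← Subgroup.mul_normal M A0, sup_comm M A0, hMA0top]; trivial
        obtain ⟨m, hm, a, ha, rfl⟩ := hg
        rw [Subgroup.mem_inf] at hx
        have hfix : a * x * a⁻¹ = x := by
          rw [hFcomm a (hA0F ha) x (hA0F (hx.1)), mul_assoc, mul_inv_cancel, mul_one]
        have : m * a * x * (m * a)⁻¹ = m * x * m⁻¹ := by
          rw [mul_inv_rev, show m * a * x * (a⁻¹ * m⁻¹) = m * (a * x * a⁻¹) * m⁻¹ by group, hfix]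
        rw [this]
        exact Subgroup.mem_inf.2 ⟨hA0n.conj_mem x hx.1 m,
          M.mul_mem (M.mul_mem hm hx.2) (M.inv_mem hm)⟩
      rcases hA0min (A0 ⊓ M) hnormal inf_le_left with h | h
      · exact h
      · exact absurd (h ▸ inf_le_right) hA0M
    have hHMlt : H ⊓ M < H := by
      rcases lt_or_eq_of_le (inf_le_left : H ⊓ M ≤ H) with h | h
      · exact h
      · exfalso
        apply hA0M
        have : H ≤ M := by rw [← h]; exact inf_le_right
        exact hA0H.trans this
    have hmod : H ⊓ (A0 ⊔ M) = A0 ⊔ (H ⊓ M) := auxModular A0 H M hA0H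
    rw [hMA0top, inf_top_eq] at hmod
    have hsup' : (H ⊓ M) ⊔ F = ⊤ := by
      have h1 : H ⊔ F = (H ⊓ M) ⊔ F := by
        conv_lhs => rw [hmod]
        rw [sup_comm A0 (H ⊓ M), sup_assoc, sup_eq_right.mpr hA0F]
      rw [← h1, hHF]
    obtain ⟨A, hAle, hAF, hAsup⟩ := IH (H ⊓ M) hHMlt hsup'
    exact ⟨A, hAle.trans inf_le_left, hAF, hAsup⟩
  obtain ⟨A, _, hAF, hAsup⟩ := main ⊤ (by rw [top_sup_eq])
  exact ⟨A, hAF, hAsup⟩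

end Aux3

section Main
open Pointwise

/-- If `G` is finite with trivial Frattini subgroup and trivial `O_π(G)`, and every minimal
normal subgroup of `G` is abelian, then the Fitting subgroup `F(G)` is an abelian `π'`-group
which is self-centralizing, and `G` splits as `F(G) ⋊ A` over it. -/
theorem fitting_self_centralizing_of_frattini_trivial
    (G : Type*) [Group G] [Finite G] (π : Set ℕ) (hπ : ∀ q ∈ π, Nat.Prime q)
    (hfrattini : frattini G = ⊥)
    (hOπ : ∀ N : Subgroup G, N.Normal →
      (∀ q : ℕ, q.Prime → q ∣ Nat.card N → q ∈ π) → N = ⊥)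
    (hminab : ∀ N : Subgroup G, N.Normal → N ≠ ⊥ →
      (∀ M : Subgroup G, M.Normal → M ≤ N → M = ⊥ ∨ M = N) →
      ∀ x ∈ N, ∀ y ∈ N, x * y = y * x) :
    (∀ x ∈ fittingSubgroup G, ∀ y ∈ fittingSubgroup G, x * y = y * x) ∧
    (∀ q : ℕ, q.Prime → q ∣ Nat.card (fittingSubgroup G) → q ∉ π) ∧
    Subgroup.centralizer (fittingSubgroup G : Set G) = fittingSubgroup G ∧
    ∃ A : Subgroup G, Subgroup.IsComplement' (fittingSubgroup G) A := by
  have hFnormal : (fittingSubgroup G).Normal := auxFittingNormal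
  haveI := hFnormal
  have habel := auxFittingComm (G := G) hfrattini
  obtain ⟨A, hAF, hAsup⟩ := auxComplementExists hfrattini hFnormal habel
  have hFA : fittingSubgroup G ⊓ A = ⊥ := by rw [inf_comm]; exact hAF
  have hFAsup : fittingSubgroup G ⊔ A = ⊤ := by rw [sup_comm]; exact hAsup
  have hcompl : (fittingSubgroup G).IsComplement' A := by
    apply Subgroup.isComplement'_of_disjoint_and_mul_eq_univ
    · exact disjoint_iff.2 hFA
    · rw [← Subgroup.normal_mul (fittingSubgroup G) A, hFAsup]
      rfl
  have hpi' : ∀ q : ℕ, q.Prime → q ∣ Nat.card (fittingSubgroup G) → q ∉ π := by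
    intro q hq hdvd hqπ
    let T : Subgroup G :=
      { carrier := {x | x ∈ fittingSubgroup G ∧ ∀ p : ℕ, p.Prime → p ∣ orderOf x → p ∈ π}
        one_mem' := ⟨one_mem _, fun p hp hpd =>
          absurd (Nat.dvd_one.1 (by simpa using hpd)) hp.ne_one⟩
        mul_mem' := by
          rintro a b ⟨haF, ha⟩ ⟨hbF, hb⟩
          refine ⟨mul_mem haF hbF, fun p hp hpd => ?_⟩
          have hc : Commute a b := habel a haF b hbF
          have h1 : orderOf (a * b) ∣ Nat.lcm (orderOf a) (orderOf b) := hc.orderOf_mul_dvd_lcm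
          have h2 : p ∣ orderOf a * orderOf b := (hpd.trans h1).trans (Nat.lcm_dvd_mul _ _)
          rcases (Nat.Prime.dvd_mul hp).1 h2 with h | h
          · exact ha p hp h
          · exact hb p hp h
        inv_mem' := by
          rintro a ⟨haF, ha⟩
          exact ⟨inv_mem haF, fun p hp hpd => ha p hp (by rwa [orderOf_inv] at hpd)⟩ }
    have hTnormal : T.Normal := by
      constructor
      rintro x ⟨hxF, hx⟩ g
      refine ⟨hFnormal.conj_mem x hxF g, fun p hp hpd => hx p hp ?_⟩
      have horder : orderOf (g * x * g⁻¹) = orderOf x := by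
        have h3 := orderOf_injective ((MulAut.conj g) : G ≃* G).toMonoidHom
          (MulEquiv.injective _) x
        simpa [MulAut.conj_apply] using h3
      rwa [horder] at hpd
    have hT : T = ⊥ := by
      apply hOπ T hTnormal
      intro p hp hpdT
      haveI := Fintype.ofFinite ↥T
      haveI : Fact p.Prime := ⟨hp⟩
      obtain ⟨x, hx⟩ := exists_prime_orderOf_dvd_card (G := ↥T) p
        (by rwa [← Nat.card_eq_fintype_card])
      exact x.2.2 p hp (by rw [Subgroup.orderOf_coe, hx])
    haveI := Fintype.ofFinite ↥(fittingSubgroup G)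
    haveI : Fact q.Prime := ⟨hq⟩
    obtain ⟨y, hy⟩ := exists_prime_orderOf_dvd_card (G := ↥(fittingSubgroup G)) q
      (by rwa [← Nat.card_eq_fintype_card])
    have hyT : (y : G) ∈ T := by
      refine ⟨y.2, fun p hp hpd => ?_⟩
      rw [Subgroup.orderOf_coe, hy] at hpd
      rwa [(Nat.prime_dvd_prime_iff_eq hp hq).1 hpd]
    rw [hT, Subgroup.mem_bot] at hyT
    have h4 : orderOf y = 1 := by
      rw [← Subgroup.orderOf_coe, hyT, orderOf_one]
    rw [hy] at h4
    exact hq.ne_one h4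
  have hcent : Subgroup.centralizer ((fittingSubgroup G : Subgroup G) : Set G) =
      fittingSubgroup G := by
    have hFC : fittingSubgroup G ≤ Subgroup.centralizer (fittingSubgroup G : Set G) :=
      fun x hx => Subgroup.mem_centralizer_iff.2 fun h hh => habel h hh x hx
    have hCnormal : (Subgroup.centralizer (fittingSubgroup G : Set G)).Normal := by
      constructor
      intro x hx g
      rw [Subgroup.mem_centralizer_iff]
      intro h hh
      have hconj : g⁻¹ * h * g ∈ fittingSubgroup G := by
        have h5 := hFnormal.conj_mem h hh g⁻¹
        simpa using h5
      have hxc := Subgroup.mem_centralizer_iff.1 hx _ hconj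
      have h6 := congrArg (fun t => g * t * g⁻¹) hxc
      simpa [mul_assoc] using h6
    have hCA : Subgroup.centralizer (fittingSubgroup G : Set G) ⊓ A = ⊥ := by
      by_contra hne
      have hCAnormal : (Subgroup.centralizer (fittingSubgroup G : Set G) ⊓ A).Normal := by
        constructor
        intro x hx g
        rw [Subgroup.mem_inf] at hx
        have hg : g ∈ ((fittingSubgroup G : Set G) * (A : Set G)) := by
          rw [← Subgroup.normal_mul, hFAsup]; trivial
        obtain ⟨f, hf, a, ha, rfl⟩ := hg
        have h1 : a * x * a⁻¹ ∈ Subgroup.centralizer (fittingSubgroup G : Set G) ⊓ A :=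
          Subgroup.mem_inf.2 ⟨hCnormal.conj_mem x hx.1 a,
            A.mul_mem (A.mul_mem ha hx.2) (A.inv_mem ha)⟩
        have hzc := Subgroup.mem_centralizer_iff.1 (Subgroup.mem_inf.1 h1).1 f hf
        have hfix : f * (a * x * a⁻¹) * f⁻¹ = a * x * a⁻¹ := by
          rw [hzc, mul_assoc, mul_inv_cancel, mul_one]
        have h7 : f * a * x * (f * a)⁻¹ = a * x * a⁻¹ := by
          rw [mul_inv_rev,
            show f * a * x * (a⁻¹ * f⁻¹) = f * (a * x * a⁻¹) * f⁻¹ by group, hfix]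
        rw [h7]
        exact h1
      obtain ⟨A0, hA0n, hA0bot, hA0le, hA0min⟩ := auxMinNormal hCAnormal hne
      have hA0comm := hminab A0 hA0n hA0bot hA0min
      have hA0nil : Group.IsNilpotent ↥A0 :=
        auxNilpotentOfComm fun x y =>
          Subtype.ext (hA0comm (x : G) x.2 (y : G) y.2)
      have hA0F : A0 ≤ fittingSubgroup G := auxFittingLe A0 hA0n hA0nil
      have hA0A : A0 ≤ A := hA0le.trans inf_le_right
      have : A0 ≤ ⊥ := by rw [← hFA]; exact le_inf hA0F hA0A
      exact hA0bot (le_bot_iff.1 this)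
    calc Subgroup.centralizer (fittingSubgroup G : Set G)
        = Subgroup.centralizer (fittingSubgroup G : Set G) ⊓ ⊤ := (inf_top_eq _).symm
      _ = Subgroup.centralizer (fittingSubgroup G : Set G) ⊓ (fittingSubgroup G ⊔ A) := by
          rw [hFAsup]
      _ = fittingSubgroup G ⊔ (Subgroup.centralizer (fittingSubgroup G : Set G) ⊓ A) :=
          auxModular _ _ _ hFC
      _ = fittingSubgroup G := by rw [hCA, sup_bot_eq]
  exact ⟨habel, hpi', hcent, A, hcompl⟩


end Main
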